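/- Ramanujan's identity: ∑_{k=1}^∞ ∑_{j=k}^∞ 1/(k · j² · 2^j) = ζ(3) − (π²/12)·log 2. -/

import Mathlib

open MeasureTheory Real Set Filter

-- summable (1/2)^(n+1)
lemma summable_halfpow : Summable (fun n : ℕ => (1/2:ℝ)^(n+1)) := by
  simpa [pow_succ, mul_comm] using summable_geometric_two.mul_left (1/2 : ℝ)

lemma summable_half_aux {r : ℕ → ℝ} {C : ℝ} (h0 : ∀ n, 0 ≤ r n) (h1 : ∀ n, r n ≤ C) :
    Summable (fun n : ℕ => (1/2:ℝ)^(n+1) * r n) := by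
  refine Summable.of_nonneg_of_le (fun n => mul_nonneg (by positivity) (h0 n)) (fun n => ?_)
    (summable_halfpow.mul_right C)
  exact mul_le_mul_of_nonneg_left (h1 n) (by positivity)

lemma hasSum_log_half : HasSum (fun n : ℕ => (1/2:ℝ)^(n+1)/(n+1)) (Real.log 2) := by
  have h := Real.hasSum_pow_div_log_of_abs_lt_one (x := (1/2:ℝ)) (by rw [abs_of_pos] <;> norm_num)
  have : (1:ℝ) - 1/2 = 2⁻¹ := by norm_num
  rw [this, Real.log_inv, neg_neg] at h
  exact h

lemma setIntegral_tsum_eq {ι : Type*} [Countable ι] {s : Set ℝ}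
    {f : ι → ℝ → ℝ} {c : ι → ℝ}
    (hmeas : ∀ i, AEStronglyMeasurable (f i) (volume.restrict s))
    (hnn : ∀ i, ∀ᵐ x ∂(volume.restrict s), 0 ≤ f i x)
    (hint : ∀ i, IntegrableOn (f i) s)
    (hval : ∀ i, ∫ x in s, f i x = c i)
    (hc : Summable c) :
    (∫ x in s, ∑' i, f i x) = ∑' i, c i := by
  have hcnn : ∀ i, 0 ≤ c i := fun i => (hval i) ▸ integral_nonneg_of_ae (hnn i)
  have key : ∀ i, ∫⁻ x, ‖f i x‖ₑ ∂(volume.restrict s) = ENNReal.ofReal (c i) := by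
    intro i
    rw [← hval i, ofReal_integral_eq_lintegral_ofReal (hint i) (hnn i)]
    refine lintegral_congr_ae ?_
    filter_upwards [hnn i] with x hx
    exact Real.enorm_eq_ofReal hx
  rw [MeasureTheory.integral_tsum hmeas ?_]
  · exact tsum_congr hval
  · rw [funext key] at *
    rw [← ENNReal.ofReal_tsum_of_nonneg hcnn hc]
    exact ENNReal.ofReal_ne_top

lemma integral_A (n : ℕ) : ∫ u in Ioc (1/2:ℝ) 1, u^n * (Real.log u)^2 =
    2/((n:ℝ)+1)^3 - (1/2)^(n+1)*((Real.log 2)^2/((n:ℝ)+1)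
      + 2*(Real.log 2)/((n:ℝ)+1)^2 + 2/((n:ℝ)+1)^3) := by
  have hm : ((n:ℝ)+1) ≠ 0 := by positivity
  set m : ℝ := (n:ℝ)+1 with hmdef
  set G : ℝ → ℝ := fun u => u^(n+1) * ((Real.log u)^2/m - 2*(Real.log u)/m^2 + 2/m^3) with hG
  have hd : ∀ u ∈ uIcc (1/2:ℝ) 1, HasDerivAt G (u^n * (Real.log u)^2) u := by
    intro u hu
    rw [uIcc_of_le (by norm_num)] at hu
    have hu0 : u ≠ 0 := by
      intro h; rw [h] at hu; exact absurd hu.1 (by norm_num)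
    have h1 : HasDerivAt Real.log u⁻¹ u := Real.hasDerivAt_log hu0
    have hpow : HasDerivAt (fun u:ℝ => u^(n+1)) (((n:ℝ)+1)*u^n) u := by
      simpa using hasDerivAt_pow (n+1) u
    have hin : HasDerivAt (fun u => (Real.log u)^2/m - 2*(Real.log u)/m^2 + 2/m^3)
        ((2*(Real.log u)^1*u⁻¹)/m - (2*u⁻¹)/m^2) u := by
      exact (((h1.pow 2).div_const m).sub ((h1.const_mul 2).div_const (m^2))).add_const _
    have := hpow.fun_mul hin
    refine this.congr_deriv ?_
    rw [hmdef]
    field_simp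
    ring
  have hsub : uIcc (1/2:ℝ) 1 ⊆ {(0:ℝ)}ᶜ := by
    rw [uIcc_of_le (by norm_num)]
    intro x hx; simp only [mem_compl_iff, mem_singleton_iff]
    intro h; rw [h] at hx; exact absurd hx.1 (by norm_num)
  have hcont : ContinuousOn (fun u : ℝ => u^n * (Real.log u)^2) (uIcc (1/2:ℝ) 1) :=
    (continuous_pow n).continuousOn.mul ((Real.continuousOn_log.mono hsub).pow 2)
  have hftc := intervalIntegral.integral_eq_sub_of_hasDerivAt hd hcont.intervalIntegrable
  rw [← intervalIntegral.integral_of_le (by norm_num : (1/2:ℝ) ≤ 1), hftc, hG]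
  have hlog : Real.log (1/2 : ℝ) = -Real.log 2 := by
    rw [one_div, Real.log_inv]
  simp only [Real.log_one, one_pow, hlog]
  rw [hmdef]
  ring

lemma neg_log_le_rpow {u : ℝ} (hu : 0 < u) : -Real.log u ≤ 2 * u^(-(1/2):ℝ) := by
  have h1 : Real.log (u^(-(1/2):ℝ)) = -(1/2) * Real.log u := Real.log_rpow hu _
  have h2 : Real.log (u^(-(1/2):ℝ)) ≤ u^(-(1/2):ℝ) - 1 :=
    Real.log_le_sub_one_of_pos (Real.rpow_pos_of_pos hu _)
  have h3 : (0:ℝ) < u^(-(1/2):ℝ) := Real.rpow_pos_of_pos hu _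
  nlinarith [h1, h2, h3]

lemma intervalIntegrable_pow_neg_log (n : ℕ) :
    IntervalIntegrable (fun u : ℝ => u^n * (-Real.log u)) volume 0 (1/2) := by
  have hbase : IntervalIntegrable (fun u : ℝ => 2 * u^(-(1/2):ℝ)) volume 0 (1/2) :=
    (intervalIntegral.intervalIntegrable_rpow' (by norm_num)).const_mul 2
  rw [intervalIntegrable_iff_integrableOn_Ioc_of_le (by norm_num)] at hbase ⊢
  refine Integrable.mono hbase ?_ ?_
  · exact (((continuous_pow n).measurable.mul Real.measurable_log.neg)).aestronglyMeasurable
  · filter_upwards [ae_restrict_mem measurableSet_Ioc] with u hu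
    have hu0 : 0 < u := hu.1
    have hu1 : u ≤ 1 := le_trans hu.2 (by norm_num)
    have hlognn : 0 ≤ -Real.log u := by
      simpa using Real.log_nonpos (le_of_lt hu0) hu1
    have hpowle : u^n ≤ 1 := pow_le_one₀ (le_of_lt hu0) hu1
    have hpownn : (0:ℝ) ≤ u^n := le_of_lt (pow_pos hu0 n)
    rw [Real.norm_eq_abs, Real.norm_eq_abs, abs_of_nonneg (mul_nonneg hpownn hlognn),
      abs_of_nonneg (by positivity)]
    calc u^n * (-Real.log u) ≤ 1 * (-Real.log u) := by
          exact mul_le_mul_of_nonneg_right hpowle hlognn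
      _ = -Real.log u := one_mul _
      _ ≤ 2 * u^(-(1/2):ℝ) := neg_log_le_rpow hu0

lemma integral_F (n : ℕ) : ∫ u in Ioc (0:ℝ) (1/2), u^n * (-Real.log u) =
    (1/2)^(n+1) * (Real.log 2/((n:ℝ)+1) + 1/((n:ℝ)+1)^2) := by
  have hm : ((n:ℝ)+1) ≠ 0 := by positivity
  set H : ℝ → ℝ := fun u => u^(n+1)/((n:ℝ)+1)^2 - u^n * (u * Real.log u)/((n:ℝ)+1) with hH
  have hcont : ContinuousOn H (Icc (0:ℝ) (1/2)) := by
    apply Continuous.continuousOn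
    exact ((continuous_pow (n+1)).div_const _).sub
      (((continuous_pow n).mul Real.continuous_mul_log).div_const _)
  have hd : ∀ u ∈ Ioo (0:ℝ) (1/2), HasDerivAt H (u^n * (-Real.log u)) u := by
    intro u hu
    have hu0 : u ≠ 0 := ne_of_gt hu.1
    have h1 : HasDerivAt Real.log u⁻¹ u := Real.hasDerivAt_log hu0
    have hpow : HasDerivAt (fun u:ℝ => u^(n+1)) (((n:ℝ)+1)*u^n) u := by
      simpa using hasDerivAt_pow (n+1) u
    have hmul : HasDerivAt (fun u : ℝ => u^(n+1) * Real.log u)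
        (((n:ℝ)+1)*u^n * Real.log u + u^(n+1) * u⁻¹) u := hpow.mul h1
    have hH2 : H = fun u : ℝ => u^(n+1)/((n:ℝ)+1)^2 - (u^(n+1) * Real.log u)/((n:ℝ)+1) := by
      funext v; rw [hH]; ring
    rw [hH2]
    have := (hpow.div_const (((n:ℝ)+1)^2)).fun_sub (hmul.div_const ((n:ℝ)+1))
    refine this.congr_deriv ?_
    field_simp
    ring
  have hle : (0:ℝ) ≤ 1/2 := by norm_num
  have hint := intervalIntegrable_pow_neg_log n
  have hftc := intervalIntegral.integral_eq_sub_of_hasDeriv_right_of_le hle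
    hcont (fun u hu => (hd u hu).hasDerivWithinAt) hint
  rw [← intervalIntegral.integral_of_le hle, hftc]
  have hlog : Real.log (1/2 : ℝ) = -Real.log 2 := by rw [one_div, Real.log_inv]
  have h0 : H 0 = 0 := by rw [hH]; simp
  have h12 : H (1/2) = (1/2)^(n+1) * (Real.log 2/((n:ℝ)+1) + 1/((n:ℝ)+1)^2) := by
    rw [hH]
    simp only [hlog]
    field_simp
    ring
  rw [h0, h12, sub_zero]

noncomputable def Li2v : ℝ := ∑' n : ℕ, (1/2:ℝ)^(n+1)/((n:ℝ)+1)^2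
noncomputable def Li3v : ℝ := ∑' n : ℕ, (1/2:ℝ)^(n+1)/((n:ℝ)+1)^3
noncomputable def z3v : ℝ := ∑' n : ℕ, 1/((n:ℝ)+1)^3

lemma summable_Li2 : Summable (fun n : ℕ => (1/2:ℝ)^(n+1)/((n:ℝ)+1)^2) := by
  refine (summable_half_aux (r := fun n => 1/((n:ℝ)+1)^2) (C := 1)
    (fun n => by positivity) (fun n => ?_)).congr (fun n => ?_)
  · rw [div_le_one (by positivity)]
    have := Nat.cast_nonneg (α := ℝ) n
    exact one_le_pow₀ (by linarith)
  · rw [mul_one_div]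

lemma summable_Li3 : Summable (fun n : ℕ => (1/2:ℝ)^(n+1)/((n:ℝ)+1)^3) := by
  refine (summable_half_aux (r := fun n => 1/((n:ℝ)+1)^3) (C := 1)
    (fun n => by positivity) (fun n => ?_)).congr (fun n => ?_)
  · rw [div_le_one (by positivity)]
    have := Nat.cast_nonneg (α := ℝ) n
    exact one_le_pow₀ (by linarith)
  · rw [mul_one_div]

lemma summable_z3 : Summable (fun n : ℕ => 1/((n:ℝ)+1)^3) := by
  have h : Summable (fun n : ℕ => 1/(n:ℝ)^3) := Real.summable_one_div_nat_pow.mpr (by norm_num)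
  have := (summable_nat_add_iff 1).mpr h
  refine this.congr (fun n => ?_)
  push_cast
  ring

lemma hasSum_Li2 : HasSum (fun n : ℕ => (1/2:ℝ)^(n+1)/((n:ℝ)+1)^2) Li2v := summable_Li2.hasSum
lemma hasSum_Li3 : HasSum (fun n : ℕ => (1/2:ℝ)^(n+1)/((n:ℝ)+1)^3) Li3v := summable_Li3.hasSum
lemma hasSum_z3 : HasSum (fun n : ℕ => 1/((n:ℝ)+1)^3) z3v := summable_z3.hasSum

lemma hasSum_z2 : HasSum (fun n : ℕ => 1/((n:ℝ)+1)^2) (Real.pi^2/6) := by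
  have h : HasSum (fun n : ℕ => 1/((n:ℕ):ℝ)^2) (Real.pi^2/6) := hasSum_zeta_two
  have h2 := (hasSum_nat_add_iff (f := fun n : ℕ => 1/((n:ℕ):ℝ)^2) 1).mpr (by simpa using h)
  refine HasSum.congr_fun h2 (fun n => ?_)
  push_cast
  ring

lemma not_summable_harmonic_succ : ¬ Summable (fun n : ℕ => 1/((n:ℝ)+1)) := by
  intro h
  refine Real.not_summable_one_div_natCast ?_
  refine (summable_nat_add_iff 1).mp (h.congr (fun n => ?_))
  push_cast
  ring

lemma setIntegral_tsum_eq' {ι : Type*} [Countable ι] {s : Set ℝ} {F : ℝ → ℝ}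
    {f : ι → ℝ → ℝ} {c : ι → ℝ} (hs : MeasurableSet s)
    (hFeq : ∀ x ∈ s, F x = ∑' i, f i x)
    (hmeas : ∀ i, AEStronglyMeasurable (f i) (volume.restrict s))
    (hnn : ∀ i, ∀ᵐ x ∂(volume.restrict s), 0 ≤ f i x)
    (hint : ∀ i, IntegrableOn (f i) s)
    (hval : ∀ i, ∫ x in s, f i x = c i)
    (hc : Summable c) :
    (∫ x in s, F x) = ∑' i, c i := by
  rw [setIntegral_congr_fun hs (fun x hx => hFeq x hx)]
  exact setIntegral_tsum_eq hmeas hnn hint hval hc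

lemma integralA_eq : ∫ u in Ioc (1/2:ℝ) 1, (Real.log u)^2/(1-u)
    = 2*z3v - ((Real.log 2)^3 + 2*(Real.log 2)*Li2v + 2*Li3v) := by
  set L := Real.log 2 with hL
  have hcA : HasSum (fun n : ℕ => 2/((n:ℝ)+1)^3 - (1/2)^(n+1)*(L^2/((n:ℝ)+1)
      + 2*L/((n:ℝ)+1)^2 + 2/((n:ℝ)+1)^3)) (2*z3v - (L^3 + 2*L*Li2v + 2*Li3v)) := by
    have h := (hasSum_z3.mul_left 2).sub
      (((hasSum_log_half.mul_left (L^2)).add (hasSum_Li2.mul_left (2*L))).add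
        (hasSum_Li3.mul_left 2))
    have hval : L^2 * L + (2*L*Li2v) + 2*Li3v = L^3 + 2*L*Li2v + 2*Li3v := by ring
    rw [hval] at h
    refine h.congr_fun (fun n => ?_)
    ring
  refine Eq.trans (setIntegral_tsum_eq' (f := fun (n:ℕ) (u:ℝ) => u^n * (Real.log u)^2)
    measurableSet_Ioc ?_ ?_ ?_ ?_ (fun n => integral_A n) hcA.summable) ?_
  · intro u hu
    rcases eq_or_lt_of_le hu.2 with h1 | h1
    · rcases h1 with rfl; simp
    · have h0 : (0:ℝ) ≤ u := le_trans (by norm_num) (le_of_lt hu.1)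
      rw [tsum_mul_right, tsum_geometric_of_lt_one h0 h1, div_eq_mul_inv, mul_comm]
  · intro n
    exact ((continuous_pow n).measurable.mul
      (Real.measurable_log.pow_const 2)).aestronglyMeasurable
  · intro n
    filter_upwards [ae_restrict_mem measurableSet_Ioc] with x hx
    have : (0:ℝ) < x := lt_trans (by norm_num) hx.1
    positivity
  · intro n
    have hsub : Icc (1/2:ℝ) 1 ⊆ {(0:ℝ)}ᶜ := by
      intro x hx
      simp only [mem_compl_iff, mem_singleton_iff]
      intro h; rw [h] at hx; exact absurd hx.1 (by norm_num)
    have hcont : ContinuousOn (fun u : ℝ => u^n * (Real.log u)^2) (Icc (1/2:ℝ) 1) :=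
      (continuous_pow n).continuousOn.mul ((Real.continuousOn_log.mono hsub).pow 2)
    exact hcont.integrableOn_Icc.mono_set Ioc_subset_Icc_self
  · exact hcA.tsum_eq

lemma integralE_eq : ∫ t in Ioc (1/2:ℝ) 1, (-Real.log (1-t))/t = Real.pi^2/6 - Li2v := by
  have hc : HasSum (fun n : ℕ => 1/((n:ℝ)+1)^2 - (1/2)^(n+1)/((n:ℝ)+1)^2)
      (Real.pi^2/6 - Li2v) := hasSum_z2.sub hasSum_Li2
  refine Eq.trans (setIntegral_tsum_eq' (f := fun (n:ℕ) (t:ℝ) => t^n/((n:ℝ)+1))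
    measurableSet_Ioc ?_ ?_ ?_ ?_ ?_ hc.summable) hc.tsum_eq
  · intro t ht
    rcases eq_or_lt_of_le ht.2 with h1 | h1
    · rcases h1 with rfl
      simp only [sub_self, Real.log_zero, neg_zero, zero_div, one_pow]
      refine (tsum_eq_zero_of_not_summable (fun h => not_summable_harmonic_succ ?_)).symm
      exact h
    · have ht0 : (0:ℝ) < t := lt_trans (by norm_num) ht.1
      have habs : |t| < 1 := by rw [abs_of_pos ht0]; exact h1
      have hs1 := Real.hasSum_pow_div_log_of_abs_lt_one habs
      show (-Real.log (1-t))/t = ∑' n : ℕ, t^n/((n:ℝ)+1)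
      rw [← hs1.tsum_eq, div_eq_mul_inv, ← tsum_mul_right]
      refine tsum_congr (fun n => ?_)
      rw [pow_succ]
      field_simp
  · exact fun n => ((continuous_pow n).div_const _).aestronglyMeasurable
  · intro n
    filter_upwards [ae_restrict_mem measurableSet_Ioc] with t ht
    have : (0:ℝ) < t := lt_trans (by norm_num) ht.1
    positivity
  · exact fun n => (((continuous_pow n).div_const _).continuousOn.integrableOn_Icc).mono_set
      Ioc_subset_Icc_self
  · intro n
    rw [← intervalIntegral.integral_of_le (by norm_num : (1/2:ℝ) ≤ 1),
      intervalIntegral.integral_div, integral_pow]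
    push_cast
    rw [one_pow]
    have hn : ((n:ℝ)+1) ≠ 0 := by positivity
    field_simp

lemma integralF_eq : ∫ u in Ioc (0:ℝ) (1/2), (-Real.log u)/(1-u) = (Real.log 2)^2 + Li2v := by
  set L := Real.log 2 with hL
  have hc : HasSum (fun n : ℕ => (1/2:ℝ)^(n+1) * (L/((n:ℝ)+1) + 1/((n:ℝ)+1)^2))
      (L^2 + Li2v) := by
    have h := (hasSum_log_half.mul_left L).add hasSum_Li2
    have : L * L = L^2 := by ring
    rw [this] at h
    exact h.congr_fun (fun n => by ring)
  refine Eq.trans (setIntegral_tsum_eq' (f := fun (n:ℕ) (u:ℝ) => u^n * (-Real.log u))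
    measurableSet_Ioc ?_ ?_ ?_ ?_ (fun n => integral_F n) hc.summable) hc.tsum_eq
  · intro u hu
    have hu0 : (0:ℝ) < u := hu.1
    have hu1 : u < 1 := lt_of_le_of_lt hu.2 (by norm_num)
    rw [tsum_mul_right, tsum_geometric_of_lt_one (le_of_lt hu0) hu1,
      div_eq_mul_inv, mul_comm]
  · exact fun n => ((continuous_pow n).measurable.mul
      Real.measurable_log.neg).aestronglyMeasurable
  · intro n
    filter_upwards [ae_restrict_mem measurableSet_Ioc] with u hu
    have h1 : Real.log u ≤ 0 := Real.log_nonpos (le_of_lt hu.1) (le_trans hu.2 (by norm_num))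
    have h2 : (0:ℝ) ≤ u^n := le_of_lt (pow_pos hu.1 n)
    nlinarith
  · intro n
    have := intervalIntegrable_pow_neg_log n
    rwa [intervalIntegrable_iff_integrableOn_Ioc_of_le (by norm_num)] at this

lemma subst_aux (f : ℝ → ℝ) : ∫ t in Ioc (0:ℝ) (1/2), f (1-t) = ∫ u in Ioc (1/2:ℝ) 1, f u := by
  rw [← intervalIntegral.integral_of_le (by norm_num : (0:ℝ) ≤ 1/2),
      ← intervalIntegral.integral_of_le (by norm_num : (1/2:ℝ) ≤ 1)]
  have h := intervalIntegral.integral_comp_sub_left (a := (0:ℝ)) (b := 1/2) f 1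
  have h2 : (1:ℝ) - 1/2 = 1/2 := by norm_num
  have h3 : (1:ℝ) - 0 = 1 := by norm_num
  rw [h2, h3] at h
  exact h

lemma li2_id : 2*Li2v = Real.pi^2/6 - (Real.log 2)^2 := by
  have h1 := integralE_eq
  have h2 : ∫ t in Ioc (1/2:ℝ) 1, (-Real.log (1-t))/t
      = ∫ u in Ioc (0:ℝ) (1/2), (-Real.log u)/(1-u) := by
    rw [← subst_aux (fun u => (-Real.log (1-u))/u)]
    refine setIntegral_congr_fun measurableSet_Ioc (fun t ht => ?_)
    have : (1:ℝ) - (1-t) = t := by ring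
    rw [this]
  rw [h2, integralF_eq] at h1
  linarith

noncomputable def cB : ℕ×ℕ → ℝ :=
  fun p => 1/(((p.1:ℝ)+1)*((p.2:ℝ)+1)*((p.1:ℝ)+(p.2:ℝ)+2)*2^(p.1+p.2+2))

set_option maxHeartbeats 1000000 in
lemma summable_geom_prod : Summable (fun p : ℕ×ℕ => (1/2:ℝ)^(p.1+1)*(1/2)^(p.2+1)) := by
  have hge : (0 : ℕ → ℝ) ≤ fun n : ℕ => (1/2:ℝ)^(n+1) := Pi.le_def.mpr (fun n => by positivity)
  exact summable_halfpow.mul_of_nonneg summable_halfpow hge hge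

lemma geom_prod_eq (p : ℕ×ℕ) : ((1:ℝ)/2)^(p.1+1)*(1/2)^(p.2+1) = 1/2^(p.1+p.2+2) := by
  rw [div_pow, div_pow, one_pow, one_pow, div_mul_div_comm, one_mul, ← pow_add]
  congr 2
  omega

lemma summable_cB : Summable cB := by
  refine Summable.of_nonneg_of_le (fun p => by simp only [cB]; positivity)
    (fun p => ?_) summable_geom_prod
  rw [geom_prod_eq, cB]
  have h1 : (0:ℝ) ≤ (p.1:ℝ) := Nat.cast_nonneg _
  have h2 : (0:ℝ) ≤ (p.2:ℝ) := Nat.cast_nonneg _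
  have hpow : (0:ℝ) < 2^(p.1+p.2+2) := by positivity
  have hD : (1:ℝ) ≤ ((p.1:ℝ)+1)*((p.2:ℝ)+1)*((p.1:ℝ)+(p.2:ℝ)+2) := by
    have ha : (1:ℝ) ≤ (p.1:ℝ)+1 := by linarith
    have hb : (1:ℝ) ≤ (p.2:ℝ)+1 := by linarith
    have hc : (1:ℝ) ≤ (p.1:ℝ)+(p.2:ℝ)+2 := by linarith
    have h12 : (1:ℝ) ≤ ((p.1:ℝ)+1)*((p.2:ℝ)+1) := by nlinarith
    nlinarith [mul_le_mul h12 hc (by norm_num : (0:ℝ) ≤ 1) (by linarith : (0:ℝ) ≤ ((p.1:ℝ)+1)*((p.2:ℝ)+1))]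
  apply div_le_div_of_nonneg_left (by norm_num) hpow
  exact le_mul_of_one_le_left hpow.le hD

set_option maxHeartbeats 1000000 in
lemma integralB_eq : ∫ t in Ioc (0:ℝ) (1/2), (Real.log (1-t))^2/t = ∑' p : ℕ×ℕ, cB p := by
  refine setIntegral_tsum_eq'
    (f := fun (p : ℕ×ℕ) (t:ℝ) => t^(p.1+p.2+1)/(((p.1:ℝ)+1)*((p.2:ℝ)+1)))
    measurableSet_Ioc ?_ ?_ ?_ ?_ ?_ summable_cB
  · intro t ht
    have ht0 : (0:ℝ) < t := ht.1
    have ht1 : t < 1 := lt_of_le_of_lt ht.2 (by norm_num)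
    have habs : |t| < 1 := by rw [abs_of_pos ht0]; exact ht1
    have hs1 := Real.hasSum_pow_div_log_of_abs_lt_one habs
    have hnn : (0 : ℕ → ℝ) ≤ fun n : ℕ => t^(n+1)/((n:ℝ)+1) :=
      Pi.le_def.mpr (fun n => by have := le_of_lt ht0; positivity)
    have hprod : Summable (fun p : ℕ×ℕ =>
        (t^(p.1+1)/((p.1:ℝ)+1)) * (t^(p.2+1)/((p.2:ℝ)+1))) :=
      hs1.summable.mul_of_nonneg hs1.summable hnn hnn
    have hsq : (Real.log (1-t))^2 = ∑' p : ℕ×ℕ,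
        (t^(p.1+1)/((p.1:ℝ)+1)) * (t^(p.2+1)/((p.2:ℝ)+1)) := by
      have hmm := Summable.tsum_mul_tsum hs1.summable hs1.summable hprod
      rw [hs1.tsum_eq] at hmm
      calc (Real.log (1-t))^2 = (-Real.log (1-t)) * (-Real.log (1-t)) := by ring
        _ = _ := hmm
    show (Real.log (1-t))^2/t = ∑' p : ℕ×ℕ, t^(p.1+p.2+1)/(((p.1:ℝ)+1)*((p.2:ℝ)+1))
    rw [hsq, div_eq_mul_inv, ← tsum_mul_right]
    refine tsum_congr (fun p => ?_)
    have hp : t^(p.1+1) * t^(p.2+1) = t^(p.1+p.2+1) * t := by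
      rw [← pow_add, ← pow_succ]
      congr 1
      omega
    rw [div_mul_div_comm, hp]
    field_simp
  · exact fun p => ((continuous_pow _).div_const _).aestronglyMeasurable
  · intro p
    filter_upwards [ae_restrict_mem measurableSet_Ioc] with t ht
    have : (0:ℝ) < t := ht.1
    positivity
  · exact fun p => (((continuous_pow _).div_const _).continuousOn.integrableOn_Icc).mono_set
      Ioc_subset_Icc_self
  · intro p
    rw [← intervalIntegral.integral_of_le (by norm_num : (0:ℝ) ≤ 1/2),
      intervalIntegral.integral_div, integral_pow, cB]
    have he : p.1+p.2+1+1 = p.1+p.2+2 := by omega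
    rw [he]
    have h0 : (0:ℝ)^(p.1+p.2+2) = 0 := zero_pow (by omega)
    rw [h0, sub_zero]
    have h4 : ((1:ℝ)/2)^(p.1+p.2+2) = 1/2^(p.1+p.2+2) := by rw [div_pow, one_pow]
    rw [h4]
    push_cast
    have h1 : ((p.1:ℝ)+1) ≠ 0 := by positivity
    have h2 : ((p.2:ℝ)+1) ≠ 0 := by positivity
    have h3 : ((p.1:ℝ)+(p.2:ℝ)+2) ≠ 0 := by positivity
    have hpow : (2:ℝ)^(p.1+p.2+2) ≠ 0 := by positivity
    field_simp
    ring

lemma Isum_eq : ∑' p : ℕ×ℕ, cB p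
    = 2*z3v - ((Real.log 2)^3 + 2*(Real.log 2)*Li2v + 2*Li3v) := by
  rw [← integralB_eq]
  have hsub : ∫ t in Ioc (0:ℝ) (1/2), (Real.log (1-t))^2/t
      = ∫ u in Ioc (1/2:ℝ) 1, (Real.log u)^2/(1-u) := by
    rw [← subst_aux (fun u => (Real.log u)^2/(1-u))]
    refine setIntegral_congr_fun measurableSet_Ioc (fun t ht => ?_)
    have h : (1:ℝ) - (1-t) = t := by ring
    simp only [h]
  rw [hsub, integralA_eq]

noncomputable def Gf : ℕ×ℕ → ℝ :=
  fun p => 1/(((p.1:ℝ)+1)*((p.1:ℝ)+(p.2:ℝ)+2)^2*2^(p.1+p.2+2))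

lemma summable_Gf : Summable Gf := by
  refine Summable.of_nonneg_of_le (fun p => by simp only [Gf]; positivity)
    (fun p => ?_) summable_geom_prod
  rw [geom_prod_eq, Gf]
  have h1 : (0:ℝ) ≤ (p.1:ℝ) := Nat.cast_nonneg _
  have h2 : (0:ℝ) ≤ (p.2:ℝ) := Nat.cast_nonneg _
  have hpow : (0:ℝ) < 2^(p.1+p.2+2) := by positivity
  have hD : (1:ℝ) ≤ ((p.1:ℝ)+1)*((p.1:ℝ)+(p.2:ℝ)+2)^2 := by nlinarith
  apply div_le_div_of_nonneg_left (by norm_num) hpow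
  exact le_mul_of_one_le_left hpow.le hD

lemma two_T_eq : 2 * (∑' p : ℕ×ℕ, Gf p) = ∑' p : ℕ×ℕ, cB p := by
  have hswap : Summable (fun p : ℕ×ℕ => Gf p.swap) := summable_Gf.prod_symm
  have h1 : ∑' p : ℕ×ℕ, Gf p.swap = ∑' p : ℕ×ℕ, Gf p := by
    exact (Equiv.prodComm ℕ ℕ).tsum_eq Gf
  have h2 : ∑' p : ℕ×ℕ, (Gf p + Gf p.swap) = (∑' p : ℕ×ℕ, Gf p) + ∑' p : ℕ×ℕ, Gf p.swap :=
    Summable.tsum_add summable_Gf hswap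
  rw [h1] at h2
  rw [two_mul, ← h2]
  refine tsum_congr (fun p => ?_)
  simp only [Gf, cB, Prod.fst_swap, Prod.snd_swap]
  have he : p.2+p.1+2 = p.1+p.2+2 := by omega
  rw [he]
  have h1 : ((p.1:ℝ)+1) > 0 := by positivity
  have h2 : ((p.2:ℝ)+1) > 0 := by positivity
  have h3 : ((p.1:ℝ)+(p.2:ℝ)+2) > 0 := by positivity
  have h4 : ((p.2:ℝ)+(p.1:ℝ)+2) > 0 := by positivity
  have hpow : (0:ℝ) < 2^(p.1+p.2+2) := by positivity
  field_simp
  ring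

lemma f_succ_eq_Gf (k j : ℕ) :
    (1:ℝ) / (((k:ℝ) + 1) * (((j+1:ℕ):ℝ) + (k:ℝ) + 1) ^ 2 * 2 ^ ((j+1) + k + 1))
      = Gf (k, j) := by
  have he : (j+1) + k + 1 = k + j + 2 := by omega
  rw [he, Gf]
  congr 1
  push_cast
  ring

lemma f_zero_eq (k : ℕ) :
    (1:ℝ) / (((k:ℝ) + 1) * (((0:ℕ):ℝ) + (k:ℝ) + 1) ^ 2 * 2 ^ (0 + k + 1))
      = (1/2:ℝ)^(k+1)/((k:ℝ)+1)^3 := by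
  have he : 0 + k + 1 = k + 1 := by omega
  rw [he]
  have h1 : ((k:ℝ)+1) > 0 := by positivity
  have hpow : (0:ℝ) < 2^(k+1) := by positivity
  rw [div_pow, one_pow]
  push_cast
  field_simp
  ring

lemma summable_f_inner (k : ℕ) :
    Summable (fun j : ℕ => (1:ℝ) / (((k:ℝ) + 1) * ((j:ℝ) + (k:ℝ) + 1) ^ 2 * 2 ^ (j + k + 1))) := by
  refine Summable.of_nonneg_of_le (fun j => by positivity) (fun j => ?_) summable_halfpow
  have h1 : (0:ℝ) ≤ (k:ℝ) := Nat.cast_nonneg _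
  have h2 : (0:ℝ) ≤ (j:ℝ) := Nat.cast_nonneg _
  have hD : (1:ℝ) ≤ ((k:ℝ)+1)*((j:ℝ)+(k:ℝ)+1)^2 := by nlinarith
  have hle : (2:ℝ)^(j+1) ≤ ((k:ℝ)+1)*((j:ℝ)+(k:ℝ)+1)^2 * 2^(j+k+1) := by
    have hmono : (2:ℝ)^(j+1) ≤ 2^(j+k+1) := by
      apply pow_le_pow_right₀ (by norm_num)
      omega
    nlinarith [pow_pos (by norm_num : (0:ℝ) < 2) (j+k+1), pow_pos (by norm_num : (0:ℝ) < 2) (j+1)]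
  have hgoal : (1:ℝ)/(((k:ℝ)+1)*((j:ℝ)+(k:ℝ)+1)^2*2^(j+k+1)) ≤ 1/2^(j+1) := by
    apply one_div_le_one_div_of_le (by positivity) hle
  calc (1:ℝ)/(((k:ℝ)+1)*((j:ℝ)+(k:ℝ)+1)^2*2^(j+k+1)) ≤ 1/2^(j+1) := hgoal
    _ = (1/2:ℝ)^(j+1) := by rw [div_pow, one_pow]

theorem ramanujan_double_sum :
    (∑' k : ℕ, ∑' j : ℕ,
      (1:ℝ) / (((k:ℝ) + 1) * ((j:ℝ) + (k:ℝ) + 1) ^ 2 * 2 ^ (j + k + 1)))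
    = (∑' n : ℕ, 1 / ((n:ℝ) + 1) ^ 3) - (Real.pi ^ 2 / 12) * Real.log 2 := by
  have hGnn : (0 : ℕ×ℕ → ℝ) ≤ Gf := Pi.le_def.mpr (fun p => by simp only [Gf]; positivity)
  have hsumT : Summable (fun k : ℕ => ∑' j : ℕ, Gf (k, j)) :=
    ((summable_prod_of_nonneg hGnn).mp summable_Gf).2
  have hpeel : ∀ k : ℕ, (∑' j : ℕ,
      (1:ℝ) / (((k:ℝ) + 1) * ((j:ℝ) + (k:ℝ) + 1) ^ 2 * 2 ^ (j + k + 1)))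
      = (1/2:ℝ)^(k+1)/((k:ℝ)+1)^3 + ∑' j : ℕ, Gf (k, j) := by
    intro k
    rw [Summable.tsum_eq_zero_add (summable_f_inner k)]
    congr 1
    · exact f_zero_eq k
    · exact tsum_congr (fun j => f_succ_eq_Gf k j)
  rw [tsum_congr hpeel, Summable.tsum_add summable_Li3 hsumT]
  have hT : ∑' k : ℕ, ∑' j : ℕ, Gf (k, j) = ∑' p : ℕ×ℕ, Gf p :=
    (Summable.tsum_prod summable_Gf).symm
  rw [hT]
  have h2T := two_T_eq
  rw [Isum_eq] at h2T
  have hLi2v : Li2v = Real.pi^2/12 - (Real.log 2)^2/2 := by linarith [li2_id]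
  have hTval : (∑' p : ℕ×ℕ, Gf p)
      = z3v - (Real.log 2)^3/2 - Real.log 2 * Li2v - Li3v := by linarith
  have hz3 : (∑' n : ℕ, 1 / ((n:ℝ) + 1) ^ 3) = z3v := rfl
  have hLi3 : (∑' k : ℕ, (1/2:ℝ)^(k+1)/((k:ℝ)+1)^3) = Li3v := rfl
  rw [hLi3, hz3, hTval, hLi2v]
  ring
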